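/- Let (V, Q) be an FBAS with top tier T. If every minimal quorum Û of (V, Q) satisfies 2·|Û| > |T|, then (V, Q) enjoys quorum intersection, i.e., any two quorums of (V, Q) share a node. -/
import Mathlib

open Finset

variable {α : Type*} [DecidableEq α]

/-- `U` is a quorum of the FBAS `(V, Q)`: a nonempty subset of `V` containing,
for every member `v`, some slice `q ∈ Q v` with `q ⊆ U`. -/
def IsQuorum (V : Finset α) (Q : α → Finset (Finset α)) (U : Finset α) : Prop :=
  U ⊆ V ∧ U.Nonempty ∧ ∀ v ∈ U, ∃ q ∈ Q v, q ⊆ U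

/-- A minimal quorum: a quorum none of whose proper subsets is a quorum. -/
def IsMinimalQuorum (V : Finset α) (Q : α → Finset (Finset α)) (U : Finset α) : Prop :=
  IsQuorum V Q U ∧ ∀ U' ⊂ U, ¬IsQuorum V Q U'

/-- A blocking set: a subset of `V` intersecting every quorum of `(V, Q)`. -/
def IsBlocking (V : Finset α) (Q : α → Finset (Finset α)) (B : Finset α) : Prop :=
  B ⊆ V ∧ ∀ U, IsQuorum V Q U → (B ∩ U).Nonempty

/-- A minimal blocking set: a blocking set none of whose proper subsets is blocking. -/
def IsMinimalBlocking (V : Finset α) (Q : α → Finset (Finset α)) (B : Finset α) : Prop :=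
  IsBlocking V Q B ∧ ∀ B' ⊂ B, ¬IsBlocking V Q B'

/-- A splitting set: a subset of `V` containing the intersection of two distinct quorums. -/
def IsSplitting (V : Finset α) (Q : α → Finset (Finset α)) (S : Finset α) : Prop :=
  S ⊆ V ∧ ∃ U₁ U₂, IsQuorum V Q U₁ ∧ IsQuorum V Q U₂ ∧ U₁ ≠ U₂ ∧ U₁ ∩ U₂ ⊆ S

/-- A minimal splitting set: a splitting set none of whose proper subsets is splitting. -/
def IsMinimalSplitting (V : Finset α) (Q : α → Finset (Finset α)) (S : Finset α) : Prop :=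
  IsSplitting V Q S ∧ ∀ S' ⊂ S, ¬IsSplitting V Q S'

/-- Well-formedness of an FBAS `(V, Q)`: every slice of every node `v ∈ V`
contains `v` and is a subset of `V`. -/
def WellFormed (V : Finset α) (Q : α → Finset (Finset α)) : Prop :=
  ∀ v ∈ V, ∀ q ∈ Q v, v ∈ q ∧ q ⊆ V

/-- `T` is the top tier of `(V, Q)`: the union of all minimal quorums. -/
def IsTopTier (V : Finset α) (Q : α → Finset (Finset α)) (T : Finset α) : Prop :=
  ∀ v, v ∈ T ↔ ∃ U, IsMinimalQuorum V Q U ∧ v ∈ U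

/-- `(V, Q)` enjoys quorum intersection: any two quorums share a node. -/
def QuorumIntersection (V : Finset α) (Q : α → Finset (Finset α)) : Prop :=
  ∀ U₁ U₂, IsQuorum V Q U₁ → IsQuorum V Q U₂ → (U₁ ∩ U₂).Nonempty

/-- Every quorum contains a minimal quorum. -/
lemma exists_minimal_quorum_subset (V : Finset α) (Q : α → Finset (Finset α)) :
    ∀ U, IsQuorum V Q U → ∃ Um ⊆ U, IsMinimalQuorum V Q Um := by
  intro U
  induction U using Finset.strongInduction with
  | _ U ih =>
    intro hU
    by_cases hmin : ∀ U' ⊂ U, ¬IsQuorum V Q U'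
    · exact ⟨U, subset_rfl, hU, hmin⟩
    · push_neg at hmin
      obtain ⟨U', hU'sub, hU'⟩ := hmin
      obtain ⟨Um, hsub, hm⟩ := ih U' hU'sub hU'
      exact ⟨Um, hsub.trans hU'sub.subset, hm⟩

/-- if every minimal quorum contains more than half of the top
tier, then the FBAS enjoys quorum intersection. -/
theorem large_minimal_quorums_imply_intersection
    (V : Finset α) (Q : α → Finset (Finset α)) (hwf : WellFormed V Q)
    (T : Finset α) (hT : IsTopTier V Q T)
    (hbig : ∀ Um, IsMinimalQuorum V Q Um → 2 * Um.card > T.card) :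
    QuorumIntersection V Q := by
  intro U₁ U₂ h₁ h₂
  obtain ⟨M₁, hM₁sub, hM₁⟩ := exists_minimal_quorum_subset V Q U₁ h₁
  obtain ⟨M₂, hM₂sub, hM₂⟩ := exists_minimal_quorum_subset V Q U₂ h₂
  have hT₁ : M₁ ⊆ T := fun v hv => (hT v).mpr ⟨M₁, hM₁, hv⟩
  have hT₂ : M₂ ⊆ T := fun v hv => (hT v).mpr ⟨M₂, hM₂, hv⟩
  have hu : (M₁ ∪ M₂).card ≤ T.card := card_le_card (union_subset hT₁ hT₂)
  have hkey : 0 < (M₁ ∩ M₂).card := by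
    have := card_union_add_card_inter M₁ M₂
    have h1 := hbig M₁ hM₁
    have h2 := hbig M₂ hM₂
    omega
  have : (M₁ ∩ M₂).Nonempty := card_pos.mp hkey
  exact this.mono (inter_subset_inter hM₁sub hM₂sub)
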